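/- arXiv:0807.4957 — 4 statements merged into one kernel-verified Lean document; each statement's English description precedes it below -/
import Mathlib

section
/- Let E be a monoidal category which is locally presentable, abelian, whose monoidal product preserves colimits and finite limits in each variable, and let C be a comonoid in E. If f : C → D is a morphism of comonoids, then the image Im(U(f)) of the underlying map carries a comonoid structure making the image factorization U(C) → Im(f) → U(D) a factorization in Comon(E): the monomorphism m : Im(f) → U(D) exhibits Im(f) as an E-subobject of D, and the canonical epimorphism e : U(C) → Im(f) is a morphism of comonoids. -/
open CategoryTheory Limits MonoidalCategory

universe w v u

namespace Paper

/-- A small category `J` is `κ`-filtered if every diagram of size `< κ` in `J`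
admits a cocone. -/
def IsCardinalFiltered (J : Type v) [SmallCategory J] (κ : Cardinal.{v}) : Prop :=
  ∀ (K : Type v) [SmallCategory K], Cardinal.mk K < κ →
    Cardinal.mk ((X : K) × (Y : K) × (X ⟶ Y)) < κ →
    ∀ F : K ⥤ J, Nonempty (Limits.Cocone F)

/-- An object `X` of a category `C` is `κ`-presentable if its covariant hom functor
preserves `κ`-filtered colimits. -/
def IsPresentable {C : Type u} [Category.{v} C] (κ : Cardinal.{v}) (X : C) : Prop :=
  ∀ (J : Type v) [SmallCategory J], IsCardinalFiltered J κ →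
    Nonempty (PreservesColimitsOfShape J (coyoneda.obj (Opposite.op X)))

/-- A category is locally presentable if it is cocomplete and there is a regular cardinal `κ`
and a set of `κ`-presentable objects such that every object is a `κ`-filtered colimit of
objects from this set. -/
def LocallyPresentable (C : Type u) [Category.{v} C] : Prop :=
  HasColimitsOfSize.{v, v} C ∧
  ∃ κ : Cardinal.{v}, κ.IsRegular ∧
    ∃ (ι : Type v) (G : ι → C),
      (∀ i, IsPresentable κ (G i)) ∧
      ∀ X : C, ∃ (J : Type v) (_ : SmallCategory J) (_ : IsCardinalFiltered J κ)
        (F : J ⥤ C) (t : F ⟶ (Functor.const J).obj X),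
        Nonempty (IsColimit (Cocone.mk X t)) ∧ ∀ j, ∃ i, Nonempty (F.obj j ≅ G i)

/-- `f` is a retract of `g` in the arrow category. -/
def RetractOf {C : Type u} [Category.{v} C] {X Y X' Y' : C}
    (f : X ⟶ Y) (g : X' ⟶ Y') : Prop :=
  ∃ (s : X ⟶ X') (r : X' ⟶ X) (s' : Y ⟶ Y') (r' : Y' ⟶ Y),
    s ≫ r = 𝟙 X ∧ s' ≫ r' = 𝟙 Y ∧ s ≫ g = f ≫ s' ∧ g ≫ r' = r ≫ f

/-- A class of morphisms is closed under retracts. -/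
def ClosedUnderRetracts {C : Type u} [Category.{v} C] (P : MorphismProperty C) : Prop :=
  ∀ {X Y X' Y' : C} (f : X ⟶ Y) (g : X' ⟶ Y'), RetractOf f g → P g → P f

/-- A (Quillen) model structure on a category `C`: three classes of maps (weak equivalences,
cofibrations and fibrations) satisfying the usual axioms. -/
structure ModelStruct (C : Type u) [Category.{v} C] where
  W : MorphismProperty C
  Cof : MorphismProperty C
  Fib : MorphismProperty C
  w_id : W.ContainsIdentities
  cof_id : Cof.ContainsIdentities
  fib_id : Fib.ContainsIdentities
  w_two_out_of_three : W.HasTwoOutOfThreeProperty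
  w_retract : ClosedUnderRetracts W
  cof_retract : ClosedUnderRetracts Cof
  fib_retract : ClosedUnderRetracts Fib
  lift_trivCof_fib : ∀ {A B X Y : C} (i : A ⟶ B) (p : X ⟶ Y),
    Cof i → W i → Fib p → HasLiftingProperty i p
  lift_cof_trivFib : ∀ {A B X Y : C} (i : A ⟶ B) (p : X ⟶ Y),
    Cof i → Fib p → W p → HasLiftingProperty i p
  factor_trivCof_fib : ∀ {X Y : C} (f : X ⟶ Y), ∃ (Z : C) (i : X ⟶ Z) (p : Z ⟶ Y),
    Cof i ∧ W i ∧ Fib p ∧ i ≫ p = f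
  factor_cof_trivFib : ∀ {X Y : C} (f : X ⟶ Y), ∃ (Z : C) (i : X ⟶ Z) (p : Z ⟶ Y),
    Cof i ∧ Fib p ∧ W p ∧ i ≫ p = f

/-- A model structure is cofibrantly generated if there are *sets* `I` and `J` of morphisms
such that the trivial fibrations are the maps with the right lifting property with respect
to `I`, and the fibrations are the maps with the right lifting property with respect to `J`. -/
def ModelStruct.CofibrantlyGenerated {C : Type u} [Category.{v} C] (M : ModelStruct C) : Prop :=
  ∃ (ι₁ : Type v) (A₁ B₁ : ι₁ → C) (g₁ : ∀ i, A₁ i ⟶ B₁ i)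
    (ι₂ : Type v) (A₂ B₂ : ι₂ → C) (g₂ : ∀ i, A₂ i ⟶ B₂ i),
    (∀ i, M.Cof (g₁ i)) ∧ (∀ i, M.Cof (g₂ i) ∧ M.W (g₂ i)) ∧
    (∀ {X Y : C} (p : X ⟶ Y), (M.Fib p ∧ M.W p) ↔ ∀ i, HasLiftingProperty (g₁ i) p) ∧
    (∀ {X Y : C} (p : X ⟶ Y), M.Fib p ↔ ∀ i, HasLiftingProperty (g₂ i) p)

/-- The pushout-product of `i : K ⟶ L` and `i' : X ⟶ Y`, i.e. the canonical map
`(K ⊗ Y) ∪_{K ⊗ X} (L ⊗ X) ⟶ L ⊗ Y`. -/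
noncomputable def ppMap {C : Type u} [Category.{v} C] [MonoidalCategory C] [HasPushouts C]
    {K L X Y : C} (i : K ⟶ L) (i' : X ⟶ Y) :
    pushout (K ◁ i') (i ▷ X) ⟶ L ⊗ Y :=
  pushout.desc (i ▷ Y) (L ◁ i') (whisker_exchange i i')

end Paper

open Paper

/-- The image of a morphism of comonoids is a comonoid: every morphism of comonoids factors,
inside the category of comonoids, as a map with epimorphic underlying map followed by a map
with monomorphic underlying map (the epi-mono image factorization of the underlying map). -/
theorem comon_image_factorization
    {E : Type u} [Category.{v} E] [MonoidalCategory E]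
    [Abelian E] (hE : LocallyPresentable E)
    [∀ X : E, PreservesColimitsOfSize.{v, v} (tensorLeft X)]
    [∀ X : E, PreservesColimitsOfSize.{v, v} (tensorRight X)]
    [∀ X : E, PreservesFiniteLimits (tensorLeft X)]
    [∀ X : E, PreservesFiniteLimits (tensorRight X)]
    {C D : Comon E} (f : C ⟶ D) :
    ∃ (M : Comon E) (e : C ⟶ M) (m : M ⟶ D),
      e ≫ m = f ∧ Epi e.hom ∧ Mono m.hom ∧
      -- the factorization is, up to isomorphism, the image factorization of `U f` in `E`
      ∃ iso : M.X ≅ Limits.image f.hom,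
        iso.hom ≫ Limits.image.ι f.hom = m.hom ∧
        e.hom ≫ iso.hom = Limits.factorThruImage f.hom := by
  set I := Limits.image f.hom with hI
  set e0 := Limits.factorThruImage f.hom with he0
  set m0 := Limits.image.ι f.hom with hm0
  haveI : StrongEpi e0 := strongEpi_of_epi e0
  haveI hm1 : Mono (m0 ▷ I) := (tensorRight I).map_mono m0
  haveI hm2 : Mono (D.X ◁ m0) := (tensorLeft D.X).map_mono m0
  haveI hmm : Mono (m0 ⊗ₘ m0) := by rw [MonoidalCategory.tensorHom_def]; exact mono_comp _ _
  have sq : CommSq (ComonObj.comul (X := C.X) ≫ (e0 ⊗ₘ e0)) e0 (m0 ⊗ₘ m0) (m0 ≫ ComonObj.comul (X := D.X)) := by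
    constructor
    have hf : e0 ≫ m0 = f.hom := image.fac f.hom
    rw [Category.assoc, tensorHom_comp_tensorHom, hf, ← IsComonHom.hom_comul f.hom, ← Category.assoc, hf]
  let Δ : I ⟶ I ⊗ I := sq.lift
  have hfl : e0 ≫ Δ = ComonObj.comul (X := C.X) ≫ (e0 ⊗ₘ e0) := sq.fac_left
  have hfr : Δ ≫ (m0 ⊗ₘ m0) = m0 ≫ ComonObj.comul (X := D.X) := sq.fac_right
  have hf : e0 ≫ m0 = f.hom := image.fac f.hom
  have hfc : e0 ≫ m0 ≫ ComonObj.counit (X := D.X) = ComonObj.counit (X := C.X) := by rw [← Category.assoc, hf, IsComonHom.hom_counit f.hom]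
  let M : Comon E :=
    { X := I
      comon := {
      counit := m0 ≫ ComonObj.counit (X := D.X)
      comul := Δ
      counit_comul := by
        rw [← cancel_epi e0, reassoc_of% hfl]
        calc ComonObj.comul (X := C.X) ≫ (e0 ⊗ₘ e0) ≫ (m0 ≫ ComonObj.counit (X := D.X)) ▷ I
            = ComonObj.comul (X := C.X) ≫ (ComonObj.counit (X := C.X) ⊗ₘ e0) := by
              rw [tensorHom_def']; simp [← whisker_exchange_assoc, ← comp_whiskerRight_assoc,
                hf, tensorHom_def', ← comp_whiskerRight, hfc]
              rw [← comp_whiskerRight, hfc]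
          _ = e0 ≫ (λ_ I).inv := ComonObj.counit_comul_hom e0
      comul_counit := by
        rw [← cancel_epi e0, reassoc_of% hfl]
        calc ComonObj.comul (X := C.X) ≫ (e0 ⊗ₘ e0) ≫ I ◁ (m0 ≫ ComonObj.counit (X := D.X))
            = ComonObj.comul (X := C.X) ≫ (e0 ⊗ₘ ComonObj.counit (X := C.X)) := by
              rw [MonoidalCategory.tensorHom_def]; simp [whisker_exchange_assoc, ← MonoidalCategory.whiskerLeft_comp_assoc,
                hf, MonoidalCategory.tensorHom_def, ← MonoidalCategory.whiskerLeft_comp, hfc]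
              rw [← MonoidalCategory.whiskerLeft_comp, hfc]
          _ = e0 ≫ (ρ_ I).inv := ComonObj.comul_counit_hom e0
      comul_assoc := by
        haveI : Mono (m0 ⊗ₘ (m0 ⊗ₘ m0)) := by
          have h3 : Mono (m0 ▷ (I ⊗ I)) := (tensorRight (I ⊗ I)).map_mono m0
          have h4 : Mono (D.X ◁ (m0 ⊗ₘ m0)) := (tensorLeft D.X).map_mono (m0 ⊗ₘ m0)
          rw [MonoidalCategory.tensorHom_def]; exact mono_comp _ _
        rw [← cancel_mono (m0 ⊗ₘ (m0 ⊗ₘ m0))]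
        have l1 : Δ ≫ I ◁ Δ ≫ (m0 ⊗ₘ (m0 ⊗ₘ m0)) = m0 ≫ ComonObj.comul (X := D.X) ≫ D.X ◁ ComonObj.comul (X := D.X) := by
          rw [MonoidalCategory.tensorHom_def]
          try simp only [Category.assoc]
          rw [whisker_exchange_assoc, ← MonoidalCategory.whiskerLeft_comp, hfr,
            MonoidalCategory.whiskerLeft_comp, ← tensorHom_def_assoc, reassoc_of% hfr]
        have l2 : Δ ≫ Δ ▷ I ≫ ((m0 ⊗ₘ m0) ⊗ₘ m0) = m0 ≫ ComonObj.comul (X := D.X) ≫ ComonObj.comul (X := D.X) ▷ D.X := by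
          rw [tensorHom_def']
          try simp only [Category.assoc]
          rw [← whisker_exchange_assoc, ← comp_whiskerRight, hfr,
            comp_whiskerRight, ← tensorHom_def'_assoc, reassoc_of% hfr]
        simp only [Category.assoc]
        rw [l1, ← associator_naturality, reassoc_of% l2, ComonObj.comul_assoc D.X]
      } }
  refine ⟨M, Comon.Hom.mk' (M := C) (N := M) e0 hfc hfl, Comon.Hom.mk' (M := M) (N := D) m0 rfl hfr.symm, ?_, ?_, ?_, Iso.refl _, by simp, by simp⟩
  · ext; exact hf
  · exact inferInstanceAs (Epi (factorThruImage f.hom))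
  · exact inferInstanceAs (Mono (image.ι f.hom))
end

section
/- Let E be a monoidal category which is locally presentable, abelian, and whose monoidal product preserves finite limits in each variable. For a comonoid C in E, the E-subobjects of C (those subobjects (D, i) in Comon(E)/C with U(i) a monomorphism in E) are precisely the strong subobjects of C in the category Comon(E). -/
open CategoryTheory Limits MonoidalCategory

universe w v u

open Paper

namespace PaperAux

open scoped ComonObj

variable {E : Type*} [Category E] [MonoidalCategory E] [Abelian E]

theorem comul_assoc_hom (M : Comon E) {Z : E} (f : M.X ⟶ Z) :
    Δ[M.X] ≫ (f ⊗ₘ (Δ[M.X] ≫ (f ⊗ₘ f))) =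
    Δ[M.X] ≫ ((Δ[M.X] ≫ (f ⊗ₘ f)) ⊗ₘ f) ≫ (α_ Z Z Z).hom := by
  calc Δ[M.X] ≫ (f ⊗ₘ (Δ[M.X] ≫ (f ⊗ₘ f)))
      = Δ[M.X] ≫ (𝟙 M.X ⊗ₘ Δ[M.X]) ≫ (f ⊗ₘ (f ⊗ₘ f)) := by
        rw [tensorHom_comp_tensorHom]; simp
    _ = Δ[M.X] ≫ (Δ[M.X] ⊗ₘ 𝟙 M.X) ≫ ((f ⊗ₘ f) ⊗ₘ f) ≫ (α_ Z Z Z).hom := by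
        rw [associator_naturality, id_tensorHom, tensorHom_id, ComonObj.comul_assoc_assoc]
    _ = _ := by rw [tensorHom_comp_tensorHom_assoc]; simp

/-- Comonoid structure on the cokernel pair (pushout along itself) of a comonoid map. -/
noncomputable def pushoutComon {A B : Comon E} (z : A ⟶ B) : Comon E where
  X := pushout z.hom z.hom
  comon := {
  counit := pushout.desc ε[B.X] ε[B.X] (by simp)
  comul := pushout.desc (Δ[B.X] ≫ (pushout.inl z.hom z.hom ⊗ₘ pushout.inl z.hom z.hom))
      (Δ[B.X] ≫ (pushout.inr z.hom z.hom ⊗ₘ pushout.inr z.hom z.hom)) (by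
    rw [IsComonHom.hom_comul_assoc z.hom, IsComonHom.hom_comul_assoc z.hom,
      tensorHom_comp_tensorHom, tensorHom_comp_tensorHom, pushout.condition])
  counit_comul := by
    apply pushout.hom_ext
    · simp only [pushout.inl_desc_assoc, Category.assoc, ← tensorHom_id, tensorHom_comp_tensorHom,
        pushout.inl_desc, Category.comp_id]
      rw [ComonObj.counit_comul_hom]
    · simp only [pushout.inr_desc_assoc, Category.assoc, ← tensorHom_id, tensorHom_comp_tensorHom,
        pushout.inr_desc, Category.comp_id]
      rw [ComonObj.counit_comul_hom]
  comul_counit := by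
    apply pushout.hom_ext
    · simp only [pushout.inl_desc_assoc, Category.assoc, ← id_tensorHom, tensorHom_comp_tensorHom,
        pushout.inl_desc, Category.comp_id]
      rw [ComonObj.comul_counit_hom]
    · simp only [pushout.inr_desc_assoc, Category.assoc, ← id_tensorHom, tensorHom_comp_tensorHom,
        pushout.inr_desc, Category.comp_id]
      rw [ComonObj.comul_counit_hom]
  comul_assoc := by
    apply pushout.hom_ext
    · simp only [pushout.inl_desc_assoc, Category.assoc, ← id_tensorHom, ← tensorHom_id,
        tensorHom_comp_tensorHom, tensorHom_comp_tensorHom_assoc, pushout.inl_desc,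
        Category.comp_id, Category.id_comp]
      rw [comul_assoc_hom]
    · simp only [pushout.inr_desc_assoc, Category.assoc, ← id_tensorHom, ← tensorHom_id,
        tensorHom_comp_tensorHom, tensorHom_comp_tensorHom_assoc, pushout.inr_desc,
        Category.comp_id, Category.id_comp]
      rw [comul_assoc_hom] }


/-- The two pushout injections, as comonoid morphisms. -/
noncomputable def pushoutComonInl {A B : Comon E} (z : A ⟶ B) : B ⟶ pushoutComon z where
  hom := pushout.inl z.hom z.hom
  isComonHom_hom := ⟨pushout.inl_desc _ _ _, pushout.inl_desc _ _ _⟩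

noncomputable def pushoutComonInr {A B : Comon E} (z : A ⟶ B) : B ⟶ pushoutComon z where
  hom := pushout.inr z.hom z.hom
  isComonHom_hom := ⟨pushout.inr_desc _ _ _, pushout.inr_desc _ _ _⟩

theorem epi_hom_of_epi {A B : Comon E} (z : A ⟶ B) [Epi z] : Epi z.hom := by
  have h : pushoutComonInl z = pushoutComonInr z := by
    rw [← cancel_epi z]
    exact Comon.ext pushout.condition
  have h' : pushout.inl z.hom z.hom = pushout.inr z.hom z.hom :=
    congrArg Comon.Hom.hom h
  constructor
  intro Z a b hab
  have := pushout.inl_desc a b hab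
  rw [h', pushout.inr_desc] at this
  exact this.symm


section Image

variable [∀ X : E, PreservesFiniteLimits (tensorLeft X)]
  [∀ X : E, PreservesFiniteLimits (tensorRight X)]

theorem mono_tensor {X Y X' Y' : E} (f : X ⟶ Y) (g : X' ⟶ Y') [Mono f] [Mono g] :
    Mono (f ⊗ₘ g) := by
  rw [MonoidalCategory.tensorHom_def]
  have h1 : Mono (f ▷ X') := (tensorRight X').map_mono f
  have h2 : Mono (Y ◁ g) := (tensorLeft Y).map_mono g
  exact mono_comp _ _

variable {D C : Comon E} (i : D ⟶ C)

theorem ker_comp_comul_tensor :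
    kernel.ι (factorThruImage i.hom) ≫
      Δ[D.X] ≫ (factorThruImage i.hom ⊗ₘ factorThruImage i.hom) = 0 := by
  have hm : Mono (image.ι i.hom ⊗ₘ image.ι i.hom) := mono_tensor _ _
  rw [← cancel_mono (image.ι i.hom ⊗ₘ image.ι i.hom), Category.assoc, Category.assoc,
    tensorHom_comp_tensorHom, image.fac, zero_comp, ← IsComonHom.hom_comul i.hom,
    ← Category.assoc]
  have hk : kernel.ι (factorThruImage i.hom) ≫ i.hom = 0 := by
    have h2 := kernel.condition_assoc (factorThruImage i.hom) (image.ι i.hom)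
    rwa [image.fac, zero_comp] at h2
  rw [hk, zero_comp]

/-- The comonoid structure on the image of the underlying map of a comonoid morphism
whose underlying map is a monomorphism... actually on any image. -/
noncomputable def imageComon : Comon E where
  X := image i.hom
  comon := {
  counit := image.ι i.hom ≫ ε[C.X]
  comul := Abelian.epiDesc (factorThruImage i.hom)
    (Δ[D.X] ≫ (factorThruImage i.hom ⊗ₘ factorThruImage i.hom)) (ker_comp_comul_tensor i)
  counit_comul := by
    rw [← cancel_epi (factorThruImage i.hom), Abelian.comp_epiDesc_assoc]
    simp only [Category.assoc, ← tensorHom_id, tensorHom_comp_tensorHom, Category.comp_id]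
    rw [image.fac_assoc, IsComonHom.hom_counit i.hom, ComonObj.counit_comul_hom]
  comul_counit := by
    rw [← cancel_epi (factorThruImage i.hom), Abelian.comp_epiDesc_assoc]
    simp only [Category.assoc, ← id_tensorHom, tensorHom_comp_tensorHom, Category.comp_id]
    rw [image.fac_assoc, IsComonHom.hom_counit i.hom, ComonObj.comul_counit_hom]
  comul_assoc := by
    rw [← cancel_epi (factorThruImage i.hom), Abelian.comp_epiDesc_assoc,
      Abelian.comp_epiDesc_assoc]
    simp only [Category.assoc, ← id_tensorHom, ← tensorHom_id, tensorHom_comp_tensorHom,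
      tensorHom_comp_tensorHom_assoc, Abelian.comp_epiDesc, Category.comp_id, Category.id_comp]
    rw [comul_assoc_hom] }


/-- The epi part of the image factorization, as a comonoid morphism. -/
noncomputable def imageComonP : D ⟶ imageComon i where
  hom := factorThruImage i.hom
  isComonHom_hom := {
  hom_counit := by
    show factorThruImage i.hom ≫ image.ι i.hom ≫ ε[C.X] = ε[D.X]
    rw [image.fac_assoc, IsComonHom.hom_counit i.hom]
  hom_comul := Abelian.comp_epiDesc (factorThruImage i.hom) _ (ker_comp_comul_tensor i) }

/-- The mono part of the image factorization, as a comonoid morphism. -/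
noncomputable def imageComonM : imageComon i ⟶ C where
  hom := image.ι i.hom
  isComonHom_hom := {
  hom_counit := rfl
  hom_comul := by
    refine (cancel_epi (factorThruImage i.hom)).1 ?_
    show factorThruImage i.hom ≫ image.ι i.hom ≫ Δ[C.X] =
      factorThruImage i.hom ≫ Abelian.epiDesc _ _ (ker_comp_comul_tensor i) ≫
        (image.ι i.hom ⊗ₘ image.ι i.hom)
    rw [image.fac_assoc, IsComonHom.hom_comul i.hom, Abelian.comp_epiDesc_assoc,
      Category.assoc, tensorHom_comp_tensorHom, image.fac] }

theorem imageComon_fac : imageComonP i ≫ imageComonM i = i :=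
  Comon.ext (image.fac i.hom)


theorem main : Mono i.hom ↔ StrongMono i := by
  constructor
  · intro hm
    haveI : Mono i.hom := hm
    haveI mono_i : Mono i := (Comon.forget E).mono_of_mono_map hm
    refine ⟨mono_i, fun {A B} z hz => ?_⟩
    constructor
    intro u v sq
    haveI : Epi z.hom := epi_hom_of_epi z
    have sqE : CommSq u.hom z.hom i.hom v.hom :=
      ⟨by rw [← Comon.comp_hom', ← Comon.comp_hom', sq.w]⟩
    haveI : StrongMono i.hom := strongMono_of_mono i.hom
    haveI : HasLiftingProperty z.hom i.hom := inferInstance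
    have lift := sqE.lift
    refine ⟨⟨⟨{ hom := sqE.lift, isComonHom_hom := ⟨?_, ?_⟩ }, ?_, ?_⟩⟩⟩
    · rw [← cancel_epi z.hom, sqE.fac_left_assoc, IsComonHom.hom_counit u.hom, IsComonHom.hom_counit z.hom]
    · have hmm : Mono (i.hom ⊗ₘ i.hom) := mono_tensor _ _
      rw [← cancel_mono (i.hom ⊗ₘ i.hom), Category.assoc, Category.assoc,
        ← IsComonHom.hom_comul i.hom, sqE.fac_right_assoc, tensorHom_comp_tensorHom, sqE.fac_right,
        IsComonHom.hom_comul v.hom]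
    · exact Comon.ext (sqE.fac_left)
    · exact Comon.ext (sqE.fac_right)
  · intro hs
    haveI hpe : Epi (imageComonP i).hom := show Epi (factorThruImage i.hom) from inferInstance
    haveI hmi : Mono (imageComonM i).hom := show Mono (image.ι i.hom) from inferInstance
    haveI : Epi (imageComonP i) := (Comon.forget E).epi_of_epi_map hpe
    have sq : CommSq (𝟙 D) (imageComonP i) i (imageComonM i) :=
      ⟨by rw [Category.id_comp, imageComon_fac]⟩
    haveI := hs.rlp (imageComonP i)
    have l := sq.lift
    have h1 : (imageComonP i).hom ≫ sq.lift.hom = 𝟙 D.X := by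
      rw [← Comon.comp_hom', sq.fac_left]; rfl
    haveI : IsIso (imageComonP i).hom := by
      refine ⟨sq.lift.hom, h1, ?_⟩
      rw [← cancel_epi ((imageComonP i).hom), ← Category.assoc, h1,
        Category.id_comp, Category.comp_id]
    have : i.hom = (imageComonP i).hom ≫ (imageComonM i).hom := by
      rw [← Comon.comp_hom', imageComon_fac]
    rw [this]
    exact mono_comp _ _

end Image

end PaperAux



/-- The `E`-subobjects of a comonoid `C` (morphisms of comonoids whose underlying map is a
monomorphism in `E`) are precisely the strong subobjects of `C` in `Comon(E)`. -/
theorem comon_E_subobjects_are_strong_subobjects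
    {E : Type u} [Category.{v} E] [MonoidalCategory E]
    [Abelian E] (hE : LocallyPresentable E)
    [∀ X : E, PreservesColimitsOfSize.{v, v} (tensorLeft X)]
    [∀ X : E, PreservesColimitsOfSize.{v, v} (tensorRight X)]
    [∀ X : E, PreservesFiniteLimits (tensorLeft X)]
    [∀ X : E, PreservesFiniteLimits (tensorRight X)]
    {D C : Comon E} (i : D ⟶ C) :
    Mono i.hom ↔ StrongMono i := PaperAux.main i
end

section
/- Let E be an abelian monoidal category whose monoidal product ⊗ is left exact in each variable. If i : D → C and j : E' → C are morphisms of comonoids in E such that U(i) and U(j) are monomorphisms, then the pullback D ∩ E' = D ×_C E' in E carries a comonoid structure (with comultiplication induced by those of D and E', and counit the restriction of the counit of C) making D ∩ E' a comonoid in E and the two projections D ∩ E' → D and D ∩ E' → E' morphisms of comonoids. -/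
open CategoryTheory Limits MonoidalCategory

universe w v u

open Paper

section Aux
variable {𝒜 : Type u} [Category.{v} 𝒜] [Abelian 𝒜]

/-- Lift a morphism through the image of a mono under a left exact endofunctor. -/
lemma aux_lift_through (F : 𝒜 ⥤ 𝒜) [PreservesFiniteLimits F]
    {A B T : 𝒜} (f : A ⟶ B) (hf : Mono f) (g : T ⟶ F.obj B)
    (hg : g ≫ F.map (cokernel.π f) = 0) :
    ∃ l : T ⟶ F.obj A, l ≫ F.map f = g := by
  haveI := hf
  have hlim := isLimitForkMapOfIsLimit' F (cokernel.condition f)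
      (Abelian.monoIsKernelOfCokernel (CokernelCofork.ofπ _ (cokernel.condition f)) (cokernelIsCokernel f))
  obtain ⟨l, hl⟩ := KernelFork.IsLimit.lift' hlim g hg
  exact ⟨l, by simpa using hl⟩

end Aux

set_option maxHeartbeats 2000000 in
/-- **Lemma 2.5, second part** If `i : D ⟶ C` and `j : E' ⟶ C` are morphisms of comonoids with
monomorphic underlying maps, then the intersection `D ∩ E'` (the pullback of the underlying
maps in `E`) carries a comonoid structure, and the two projections are morphisms of comonoids. -/
theorem comon_intersection
    {E : Type u} [Category.{v} E] [MonoidalCategory E] [Abelian E]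
    [∀ X : E, PreservesFiniteLimits (tensorLeft X)]
    [∀ X : E, PreservesFiniteLimits (tensorRight X)]
    {D E' C : Comon E} (i : D ⟶ C) (j : E' ⟶ C)
    (hi : Mono i.hom) (hj : Mono j.hom) :
    ∃ (P : Comon E) (pD : P ⟶ D) (pE : P ⟶ E'),
      IsPullback pD.hom pE.hom i.hom j.hom := by
  haveI := hi; haveI := hj
  set X : E := pullback i.hom j.hom with hX
  set fst : X ⟶ D.X := pullback.fst i.hom j.hom with hfst
  set snd : X ⟶ E'.X := pullback.snd i.hom j.hom with hsnd
  have hP : IsPullback fst snd i.hom j.hom := IsPullback.of_hasPullback _ _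
  haveI hmfst : Mono fst := inferInstance
  haveI hmsnd : Mono snd := inferInstance
  set m : X ⟶ C.X := fst ≫ i.hom with hm
  haveI hmm : Mono m := mono_comp _ _
  have hcond : fst ≫ i.hom = snd ≫ j.hom := pullback.condition
  -- whiskered pullback squares
  have hPC : IsPullback (fst ▷ C.X) (snd ▷ C.X) (i.hom ▷ C.X) (j.hom ▷ C.X) := by
    simpa using hP.map (tensorRight C.X)
  have hPX : IsPullback (X ◁ fst) (X ◁ snd) (X ◁ i.hom) (X ◁ j.hom) := by
    simpa using hP.map (tensorLeft X)
  -- the first lift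
  set a : X ⟶ D.X ⊗ C.X := fst ≫ (ComonObj.comul (X := D.X)) ≫ (D.X ◁ i.hom) with ha
  set b : X ⟶ E'.X ⊗ C.X := snd ≫ (ComonObj.comul (X := E'.X)) ≫ (E'.X ◁ j.hom) with hb
  have hw : a ≫ (i.hom ▷ C.X) = b ≫ (j.hom ▷ C.X) := by
    have h1 : a ≫ (i.hom ▷ C.X) = fst ≫ (ComonObj.comul (X := D.X)) ≫ (i.hom ⊗ₘ i.hom) := by
      rw [ha]; simp [tensorHom_def']
    have h2 : b ≫ (j.hom ▷ C.X) = snd ≫ (ComonObj.comul (X := E'.X)) ≫ (j.hom ⊗ₘ j.hom) := by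
      rw [hb]; simp [tensorHom_def']
    rw [h1, h2, ← IsComonHom.hom_comul i.hom, ← IsComonHom.hom_comul j.hom, ← Category.assoc, ← Category.assoc, hcond]
  set δ₁ : X ⟶ X ⊗ C.X := hPC.lift a b hw with hδ₁
  have hδ₁fst : δ₁ ≫ (fst ▷ C.X) = a := hPC.lift_fst a b hw
  have hδ₁snd : δ₁ ≫ (snd ▷ C.X) = b := hPC.lift_snd a b hw
  -- lift through X ◁ i.hom
  have key : ∀ (Y : Comon E) (k : Y ⟶ C) (_ : Mono k.hom) (p : X ⟶ Y.X) (_ : Mono p)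
      (hp : δ₁ ≫ (p ▷ C.X) = p ≫ (ComonObj.comul (X := Y.X)) ≫ (Y.X ◁ k.hom)),
      ∃ δ₂ : X ⟶ X ⊗ Y.X, δ₂ ≫ (X ◁ k.hom) = δ₁ := by
    intro Y k hk p hmp hp
    haveI := hk; haveI := hmp
    have hzero : δ₁ ≫ (tensorLeft X).map (cokernel.π k.hom) = 0 := by
      haveI : Mono ((tensorRight (cokernel k.hom)).map p) :=
        preserves_mono_of_preservesLimit (tensorRight (cokernel k.hom)) p
      haveI : Mono (p ▷ (cokernel k.hom)) := by simpa using this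
      rw [← cancel_mono (p ▷ (cokernel k.hom)), Limits.zero_comp]
      have hex : (X ◁ cokernel.π k.hom) ≫ (p ▷ (cokernel k.hom))
          = (p ▷ C.X) ≫ (Y.X ◁ cokernel.π k.hom) := whisker_exchange p (cokernel.π k.hom)
      have hYzero : Y.X ◁ (k.hom ≫ cokernel.π k.hom) = 0 := by
        rw [cokernel.condition]
        simpa using (tensorLeft Y.X).map_zero _ _
      calc (δ₁ ≫ (tensorLeft X).map (cokernel.π k.hom)) ≫ p ▷ cokernel k.hom
          = δ₁ ≫ (X ◁ cokernel.π k.hom) ≫ (p ▷ (cokernel k.hom)) := by simp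
        _ = δ₁ ≫ (p ▷ C.X) ≫ (Y.X ◁ cokernel.π k.hom) := by rw [hex]
        _ = p ≫ (ComonObj.comul (X := Y.X)) ≫ (Y.X ◁ k.hom) ≫ (Y.X ◁ cokernel.π k.hom) := by
              rw [← Category.assoc, hp]; simp
        _ = p ≫ (ComonObj.comul (X := Y.X)) ≫ (Y.X ◁ (k.hom ≫ cokernel.π k.hom)) := by
              rw [MonoidalCategory.whiskerLeft_comp]
        _ = 0 := by rw [hYzero]; simp
    obtain ⟨l, hl⟩ := aux_lift_through (tensorLeft X) k.hom hk δ₁ hzero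
    exact ⟨l, by simpa using hl⟩
  obtain ⟨δ₂, hδ₂⟩ := key D i hi fst hmfst (by rw [hδ₁fst])
  obtain ⟨δ₂', hδ₂'⟩ := key E' j hj snd hmsnd (by rw [hδ₁snd])
  set δ : X ⟶ X ⊗ X := hPX.lift δ₂ δ₂' (by rw [hδ₂, hδ₂']) with hδ
  have hδfst : δ ≫ (X ◁ fst) = δ₂ := hPX.lift_fst _ _ _
  have hδsnd : δ ≫ (X ◁ snd) = δ₂' := hPX.lift_snd _ _ _
  -- key identities
  haveI : Mono (D.X ◁ i.hom) := by
    have := preserves_mono_of_preservesLimit (tensorLeft D.X) i.hom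
    simpa using this
  haveI : Mono (E'.X ◁ j.hom) := by
    have := preserves_mono_of_preservesLimit (tensorLeft E'.X) j.hom
    simpa using this
  have k1 : δ ≫ (fst ⊗ₘ fst) = fst ≫ (ComonObj.comul (X := D.X)) := by
    rw [tensorHom_def', ← Category.assoc, hδfst, ← cancel_mono (D.X ◁ i.hom)]
    calc (δ₂ ≫ fst ▷ D.X) ≫ D.X ◁ i.hom
        = δ₂ ≫ (X ◁ i.hom) ≫ (fst ▷ C.X) := by
          rw [Category.assoc, ← whisker_exchange]
      _ = δ₁ ≫ (fst ▷ C.X) := by rw [← Category.assoc, hδ₂]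
      _ = (fst ≫ (ComonObj.comul (X := D.X))) ≫ D.X ◁ i.hom := by rw [hδ₁fst, ha]; simp
  have k2 : δ ≫ (snd ⊗ₘ snd) = snd ≫ (ComonObj.comul (X := E'.X)) := by
    rw [tensorHom_def', ← Category.assoc, hδsnd, ← cancel_mono (E'.X ◁ j.hom)]
    calc (δ₂' ≫ snd ▷ E'.X) ≫ E'.X ◁ j.hom
        = δ₂' ≫ (X ◁ j.hom) ≫ (snd ▷ C.X) := by
          rw [Category.assoc, ← whisker_exchange]
      _ = δ₁ ≫ (snd ▷ C.X) := by rw [← Category.assoc, hδ₂']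
      _ = (snd ≫ (ComonObj.comul (X := E'.X))) ≫ E'.X ◁ j.hom := by rw [hδ₁snd, hb]; simp
  have km : δ ≫ (m ⊗ₘ m) = m ≫ (ComonObj.comul (X := C.X)) := by
    have : (m ⊗ₘ m) = (fst ⊗ₘ fst) ≫ (i.hom ⊗ₘ i.hom) := by
      rw [hm, tensorHom_comp_tensorHom]
    rw [this, ← Category.assoc, k1, Category.assoc, ← IsComonHom.hom_comul i.hom, hm, Category.assoc]
  -- auxiliary monos
  haveI hmono1 : Mono ((𝟙_ E) ◁ m) := by
    have := preserves_mono_of_preservesLimit (tensorLeft (𝟙_ E)) m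
    simpa using this
  haveI hmono2 : Mono (m ▷ (𝟙_ E)) := by
    have := preserves_mono_of_preservesLimit (tensorRight (𝟙_ E)) m
    simpa using this
  haveI hmono3 : Mono (m ▷ (X ⊗ X)) := by
    have := preserves_mono_of_preservesLimit (tensorRight (X ⊗ X)) m
    simpa using this
  haveI hmono4 : Mono (C.X ◁ (m ⊗ₘ m)) := by
    haveI h1 : Mono (m ▷ X) := by
      have := preserves_mono_of_preservesLimit (tensorRight X) m
      simpa using this
    haveI h2 : Mono (C.X ◁ m) := by
      have := preserves_mono_of_preservesLimit (tensorLeft C.X) m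
      simpa using this
    haveI hz : Mono (C.X ◁ (m ▷ X)) := by
      have := preserves_mono_of_preservesLimit (tensorLeft C.X) (m ▷ X)
      simpa using this
    haveI hz2 : Mono (C.X ◁ (C.X ◁ m)) := by
      have := preserves_mono_of_preservesLimit (tensorLeft C.X) (C.X ◁ m)
      simpa using this
    rw [MonoidalCategory.tensorHom_def, MonoidalCategory.whiskerLeft_comp]
    exact mono_comp _ _
  haveI hmono5 : Mono (m ⊗ₘ (m ⊗ₘ m)) := by
    rw [MonoidalCategory.tensorHom_def]
    exact mono_comp _ _
  -- comonoid structure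
  refine ⟨{ X := X, comon := { counit := m ≫ (ComonObj.counit (X := C.X)), comul := δ, counit_comul := ?_,
                               comul_counit := ?_, comul_assoc := ?_ } }, ?_, ?_, ?_⟩
  · -- counit_comul
    rw [← cancel_mono ((𝟙_ E) ◁ m)]
    have hex : ((m ≫ (ComonObj.counit (X := C.X))) ▷ X) ≫ ((𝟙_ E) ◁ m) = (X ◁ m) ≫ ((m ≫ (ComonObj.counit (X := C.X))) ▷ C.X) :=
      (whisker_exchange (m ≫ (ComonObj.counit (X := C.X))) m).symm
    calc (δ ≫ (m ≫ (ComonObj.counit (X := C.X))) ▷ X) ≫ (𝟙_ E) ◁ m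
        = δ ≫ (X ◁ m) ≫ ((m ≫ (ComonObj.counit (X := C.X))) ▷ C.X) := by
          rw [Category.assoc, hex]
      _ = δ ≫ (X ◁ m) ≫ (m ▷ C.X) ≫ ((ComonObj.counit (X := C.X)) ▷ C.X) := by
          rw [comp_whiskerRight]
      _ = δ ≫ (m ⊗ₘ m) ≫ ((ComonObj.counit (X := C.X)) ▷ C.X) := by
          rw [tensorHom_def']; simp only [Category.assoc]
      _ = m ≫ (ComonObj.comul (X := C.X)) ≫ ((ComonObj.counit (X := C.X)) ▷ C.X) := by rw [← Category.assoc, km, Category.assoc]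
      _ = m ≫ (λ_ C.X).inv := by rw [ComonObj.counit_comul C.X]
      _ = (λ_ X).inv ≫ ((𝟙_ E) ◁ m) := by rw [leftUnitor_inv_naturality]
  · -- comul_counit
    rw [← cancel_mono (m ▷ (𝟙_ E))]
    have hex : (X ◁ (m ≫ (ComonObj.counit (X := C.X)))) ≫ (m ▷ (𝟙_ E)) = (m ▷ X) ≫ (C.X ◁ (m ≫ (ComonObj.counit (X := C.X)))) :=
      whisker_exchange m (m ≫ (ComonObj.counit (X := C.X)))
    calc (δ ≫ X ◁ (m ≫ (ComonObj.counit (X := C.X)))) ≫ m ▷ (𝟙_ E)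
        = δ ≫ (m ▷ X) ≫ (C.X ◁ (m ≫ (ComonObj.counit (X := C.X)))) := by rw [Category.assoc, hex]
      _ = δ ≫ (m ▷ X) ≫ (C.X ◁ m) ≫ (C.X ◁ (ComonObj.counit (X := C.X))) := by
          rw [MonoidalCategory.whiskerLeft_comp]
      _ = δ ≫ (m ⊗ₘ m) ≫ (C.X ◁ (ComonObj.counit (X := C.X))) := by
          rw [MonoidalCategory.tensorHom_def]; simp only [Category.assoc]
      _ = m ≫ (ComonObj.comul (X := C.X)) ≫ (C.X ◁ (ComonObj.counit (X := C.X))) := by rw [← Category.assoc, km, Category.assoc]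
      _ = m ≫ (ρ_ C.X).inv := by rw [ComonObj.comul_counit C.X]
      _ = (ρ_ X).inv ≫ (m ▷ (𝟙_ E)) := by rw [rightUnitor_inv_naturality]
  · -- comul_assoc
    rw [← cancel_mono (m ⊗ₘ (m ⊗ₘ m))]
    have e1 : (X ◁ δ) ≫ (m ⊗ₘ (m ⊗ₘ m)) = (m ⊗ₘ m) ≫ (C.X ◁ (ComonObj.comul (X := C.X))) := by
      calc (X ◁ δ) ≫ (m ⊗ₘ (m ⊗ₘ m))
          = (𝟙 X ⊗ₘ δ) ≫ (m ⊗ₘ (m ⊗ₘ m)) := by rw [MonoidalCategory.id_tensorHom]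
        _ = (𝟙 X ≫ m) ⊗ₘ (δ ≫ (m ⊗ₘ m)) := by rw [tensorHom_comp_tensorHom]
        _ = (m ≫ 𝟙 C.X) ⊗ₘ (m ≫ (ComonObj.comul (X := C.X))) := by
            rw [Category.id_comp, Category.comp_id, km]
        _ = (m ⊗ₘ m) ≫ (𝟙 C.X ⊗ₘ (ComonObj.comul (X := C.X))) := by rw [← tensorHom_comp_tensorHom]
        _ = (m ⊗ₘ m) ≫ (C.X ◁ (ComonObj.comul (X := C.X))) := by rw [MonoidalCategory.id_tensorHom]
    have e2 : (δ ▷ X) ≫ ((m ⊗ₘ m) ⊗ₘ m) = (m ⊗ₘ m) ≫ ((ComonObj.comul (X := C.X)) ▷ C.X) := by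
      calc (δ ▷ X) ≫ ((m ⊗ₘ m) ⊗ₘ m)
          = (δ ⊗ₘ 𝟙 X) ≫ ((m ⊗ₘ m) ⊗ₘ m) := by rw [MonoidalCategory.tensorHom_id]
        _ = (δ ≫ (m ⊗ₘ m)) ⊗ₘ (𝟙 X ≫ m) := by rw [tensorHom_comp_tensorHom]
        _ = (m ≫ (ComonObj.comul (X := C.X))) ⊗ₘ (m ≫ 𝟙 C.X) := by
            rw [Category.id_comp, Category.comp_id, km]
        _ = (m ⊗ₘ m) ≫ ((ComonObj.comul (X := C.X)) ⊗ₘ 𝟙 C.X) := by rw [← tensorHom_comp_tensorHom]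
        _ = (m ⊗ₘ m) ≫ ((ComonObj.comul (X := C.X)) ▷ C.X) := by rw [MonoidalCategory.tensorHom_id]
    have lhs : (δ ≫ X ◁ δ) ≫ (m ⊗ₘ (m ⊗ₘ m)) = m ≫ (ComonObj.comul (X := C.X)) ≫ (C.X ◁ (ComonObj.comul (X := C.X))) := by
      rw [Category.assoc, e1, ← Category.assoc, km, Category.assoc]
    have rhs : (δ ≫ (δ ▷ X) ≫ (α_ X X X).hom) ≫ (m ⊗ₘ (m ⊗ₘ m))
        = m ≫ (ComonObj.comul (X := C.X)) ≫ ((ComonObj.comul (X := C.X)) ▷ C.X) ≫ (α_ C.X C.X C.X).hom := by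
      calc (δ ≫ (δ ▷ X) ≫ (α_ X X X).hom) ≫ (m ⊗ₘ (m ⊗ₘ m))
          = δ ≫ (δ ▷ X) ≫ ((m ⊗ₘ m) ⊗ₘ m) ≫ (α_ C.X C.X C.X).hom := by
            rw [Category.assoc, Category.assoc, ← associator_naturality]
        _ = δ ≫ ((δ ▷ X) ≫ ((m ⊗ₘ m) ⊗ₘ m)) ≫ (α_ C.X C.X C.X).hom := by
            simp only [Category.assoc]
        _ = δ ≫ ((m ⊗ₘ m) ≫ ((ComonObj.comul (X := C.X)) ▷ C.X)) ≫ (α_ C.X C.X C.X).hom := by rw [e2]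
        _ = (δ ≫ (m ⊗ₘ m)) ≫ ((ComonObj.comul (X := C.X)) ▷ C.X) ≫ (α_ C.X C.X C.X).hom := by
            simp only [Category.assoc]
        _ = m ≫ (ComonObj.comul (X := C.X)) ≫ ((ComonObj.comul (X := C.X)) ▷ C.X) ≫ (α_ C.X C.X C.X).hom := by
            rw [km]; simp only [Category.assoc]
    rw [lhs, rhs, ComonObj.comul_assoc C.X]
  · exact Comon.Hom.mk' fst
      (by show fst ≫ (ComonObj.counit (X := D.X)) = (fst ≫ i.hom) ≫ (ComonObj.counit (X := C.X))
          rw [Category.assoc, IsComonHom.hom_counit i.hom]) (by rw [← k1]; rfl)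
  · exact Comon.Hom.mk' snd
      (by show snd ≫ (ComonObj.counit (X := E'.X)) = (fst ≫ i.hom) ≫ (ComonObj.counit (X := C.X))
          rw [hcond, Category.assoc, IsComonHom.hom_counit j.hom]) (by rw [← k2]; rfl)
  · exact hP
end

section
/- (Dual of Quillen's path-object argument.) Let E be a model category and F : C → E a functor admitting a right adjoint G : E → C. Define a map f of C to be a cofibration (resp. weak equivalence) if F(f) is a cofibration (resp. weak equivalence) in E. Suppose C is finitely cocomplete, has a cofibrant replacement functor, and has a functorial cylinder object for cofibrant objects (for each cofibrant X a factorization X ⊔ X →(i₀⊔i₁) Cyl(X) →(p) X of the codiagonal with i₀⊔i₁ a cofibration and p a weak equivalence). Then every map of C that has the right lifting property with respect to all cofibrations is a weak equivalence. -/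
open CategoryTheory Limits MonoidalCategory

universe w v u

open Paper


namespace Paper

variable {E : Type u} [Category.{v} E]

/-- A map with the left lifting property against all trivial fibrations is a cofibration. -/
lemma ModelStruct.cof_of_llp (M : ModelStruct E) {A B : E} (g : A ⟶ B)
    (h : ∀ {X Y : E} (p : X ⟶ Y), M.Fib p → M.W p → HasLiftingProperty g p) :
    M.Cof g := by
  obtain ⟨Z, i, p, hicof, hpfib, hpw, hfac⟩ := M.factor_cof_trivFib g
  haveI := h p hpfib hpw
  have sq : CommSq i g p (𝟙 B) := ⟨by simpa using hfac⟩
  refine M.cof_retract g i ⟨𝟙 A, 𝟙 A, sq.lift, p, by simp, sq.fac_right, ?_, ?_⟩ hicof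
  · simpa using sq.fac_left.symm
  · simpa using hfac

/-- Cofibrations are stable under composition. -/
lemma ModelStruct.cof_comp (M : ModelStruct E) {A B C' : E} (f : A ⟶ B) (g : B ⟶ C')
    (hf : M.Cof f) (hg : M.Cof g) : M.Cof (f ≫ g) := by
  apply M.cof_of_llp
  intro X Y p hp hpw
  haveI := M.lift_cof_trivFib f p hf hp hpw
  haveI := M.lift_cof_trivFib g p hg hp hpw
  infer_instance

/-- A map with the right lifting property against all trivial cofibrations is a fibration. -/
lemma ModelStruct.fib_of_rlp (M : ModelStruct E) {X Y : E} (p : X ⟶ Y)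
    (h : ∀ {A B : E} (g : A ⟶ B), M.Cof g → M.W g → HasLiftingProperty g p) :
    M.Fib p := by
  obtain ⟨Z, j, q, hjcof, hjw, hqfib, hfac⟩ := M.factor_trivCof_fib p
  haveI := h j hjcof hjw
  have sq : CommSq (𝟙 X) j p q := ⟨by simpa using hfac.symm⟩
  refine M.fib_retract p q ⟨j, sq.lift, 𝟙 Y, 𝟙 Y, sq.fac_left, by simp, ?_, ?_⟩ hqfib
  · simpa using hfac
  · simpa using sq.fac_right

/-- Fibrations are stable under composition. -/
lemma ModelStruct.fib_comp (M : ModelStruct E) {X Y Z : E} (p : X ⟶ Y) (q : Y ⟶ Z)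
    (hp : M.Fib p) (hq : M.Fib q) : M.Fib (p ≫ q) := by
  apply M.fib_of_rlp
  intro A B g hg hgw
  haveI := M.lift_trivCof_fib g p hg hgw hp
  haveI := M.lift_trivCof_fib g q hg hgw hq
  infer_instance

/-- The core case of the two-out-of-six property: the first two maps are cofibrations and
the last one is a fibration. -/
lemma ModelStruct.two_of_six_core [HasFiniteColimits E] (M : ModelStruct E)
    {P Q R S : E} (x : P ⟶ Q) (y : Q ⟶ R) (z : R ⟶ S)
    (hx : M.Cof x) (hy : M.Cof y) (hz : M.Fib z)
    (hxy : M.W (x ≫ y)) (hyz : M.W (y ≫ z)) : M.W y := by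
  haveI := M.w_two_out_of_three
  -- factor y ≫ z as trivial cofibration j followed by fibration q
  obtain ⟨T, j, q, hjcof, hjw, hqfib, hjq⟩ := M.factor_trivCof_fib (y ≫ z)
  have hqw : M.W q := M.W.of_precomp j q hjw (by rw [hjq]; exact hyz)
  -- lift j against z
  haveI := M.lift_trivCof_fib j z hjcof hjw hz
  have sq1 : CommSq y j z q := ⟨hjq.symm⟩
  obtain ⟨k, hjk, hkz⟩ : ∃ k, j ≫ k = y ∧ k ≫ z = q :=
    ⟨sq1.lift, sq1.fac_left, sq1.fac_right⟩
  -- factor k as trivial cofibration k₁ followed by fibration k₂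
  obtain ⟨T₂, k₁, k₂, hk₁cof, hk₁w, hk₂fib, hk₁₂⟩ := M.factor_trivCof_fib k
  have hk₂zw : M.W (k₂ ≫ z) := by
    apply M.W.of_precomp k₁ _ hk₁w
    rw [← Category.assoc, hk₁₂, hkz]; exact hqw
  have hk₂zfib : M.Fib (k₂ ≫ z) := M.fib_comp _ _ hk₂fib hz
  -- lift the trivial cofibration x ≫ y against the fibration k₂ to get a section σ of k₂
  haveI := M.lift_trivCof_fib (x ≫ y) k₂ (M.cof_comp x y hx hy) hxy hk₂fib
  have sq2 : CommSq (x ≫ j ≫ k₁) (x ≫ y) k₂ (𝟙 R) := by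
    constructor
    rw [Category.comp_id, Category.assoc, Category.assoc, hk₁₂, hjk]
  obtain ⟨σ, hσk₂⟩ : ∃ σ, σ ≫ k₂ = 𝟙 R := ⟨sq2.lift, sq2.fac_right⟩
  -- cylinder object on T₂
  obtain ⟨CT, c, v, hccof, hvfib, hvw, hcv⟩ :=
    M.factor_cof_trivFib (coprod.desc (𝟙 T₂) (𝟙 T₂))
  have hι₀ : M.W (coprod.inl ≫ c) := by
    apply M.W.of_postcomp _ v hvw
    rw [Category.assoc, hcv]
    simpa [coprod.inl_desc] using M.w_id.id_mem T₂
  -- lift the homotopy against the trivial fibration k₂ ≫ z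
  haveI := M.lift_cof_trivFib c (k₂ ≫ z) hccof hk₂zfib hk₂zw
  have sq3 : CommSq (coprod.desc (𝟙 T₂) (k₂ ≫ σ)) c (k₂ ≫ z) (v ≫ k₂ ≫ z) := by
    constructor
    rw [← Category.assoc c v, hcv]
    apply Limits.coprod.hom_ext
    · simp [coprod.inl_desc]
    · simp only [coprod.desc_comp, coprod.inr_desc, Category.assoc, coprod.inl_desc]
      rw [← Category.assoc σ k₂ z, hσk₂, Category.id_comp, Category.id_comp]
  obtain ⟨h, hch⟩ : ∃ h, c ≫ h = coprod.desc (𝟙 T₂) (k₂ ≫ σ) := ⟨sq3.lift, sq3.fac_left⟩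
  -- h is a weak equivalence, hence so is k₂ ≫ σ
  have hhw : M.W h := by
    apply M.W.of_precomp (coprod.inl ≫ c) h hι₀
    rw [Category.assoc, hch]
    simpa [coprod.inl_desc] using M.w_id.id_mem T₂
  have hk₂σ : M.W (k₂ ≫ σ) := by
    have : M.W ((coprod.inr ≫ c) ≫ h) := by
      apply M.W.comp_mem _ _ _ hhw
      apply M.W.of_postcomp _ v hvw
      rw [Category.assoc, hcv]
      simpa [coprod.inr_desc] using M.w_id.id_mem T₂
    rw [Category.assoc, hch] at this
    simpa [coprod.inr_desc] using this
  -- k₂ is a retract of k₂ ≫ σ, hence a weak equivalence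
  have hk₂w : M.W k₂ := by
    refine M.w_retract k₂ (k₂ ≫ σ) ⟨𝟙 T₂, 𝟙 T₂, σ, k₂, by simp, hσk₂, by simp, ?_⟩ hk₂σ
    rw [Category.assoc, hσk₂, Category.comp_id, Category.id_comp]
  -- conclude
  rw [← hjk, ← hk₁₂]
  exact M.W.comp_mem _ _ hjw (M.W.comp_mem _ _ hk₁w hk₂w)

/-- The two-out-of-six property (the instance we need): if `x ≫ y` and `y ≫ z` are weak
equivalences then so is `y`. -/
lemma ModelStruct.two_of_six [HasFiniteColimits E] (M : ModelStruct E)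
    {P Q R S : E} (x : P ⟶ Q) (y : Q ⟶ R) (z : R ⟶ S)
    (hxy : M.W (x ≫ y)) (hyz : M.W (y ≫ z)) : M.W y := by
  haveI := M.w_two_out_of_three
  -- Reduction (a): make x a cofibration
  obtain ⟨P₁, ix, px, hixcof, hpxfib, hpxw, hix⟩ := M.factor_cof_trivFib x
  apply M.W.of_precomp px y hpxw
  have h1 : M.W (ix ≫ px ≫ y) := by rw [← Category.assoc, hix]; exact hxy
  have h2 : M.W ((px ≫ y) ≫ z) := by
    rw [Category.assoc]; exact M.W.comp_mem _ _ hpxw hyz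
  -- rename: chain ix, px ≫ y, z with ix a cofibration
  clear hxy hyz hix
  generalize px ≫ y = y₁ at h1 h2 ⊢
  clear px hpxfib hpxw x
  -- Reduction (b): make z a fibration
  obtain ⟨R₁, e, z₁, hecof, hew, hz₁fib, hez⟩ := M.factor_trivCof_fib z
  apply M.W.of_postcomp _ e hew
  have h1' : M.W (ix ≫ y₁ ≫ e) := by
    rw [← Category.assoc]; exact M.W.comp_mem _ _ h1 hew
  have h2' : M.W ((y₁ ≫ e) ≫ z₁) := by rw [Category.assoc, hez]; exact h2
  clear h1 h2 hez
  generalize y₁ ≫ e = y₂ at h1' h2' ⊢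
  clear e hecof hew y₁ z
  -- Reduction (c): make the middle map a cofibration
  obtain ⟨Q₂, iy, py, hiycof, hpyfib, hpyw, hiy⟩ := M.factor_cof_trivFib y₂
  rw [← hiy]
  apply M.W.comp_mem _ _ _ hpyw
  exact M.two_of_six_core ix iy (py ≫ z₁) hixcof hiycof
    (M.fib_comp _ _ hpyfib hz₁fib)
    (M.W.of_postcomp _ py hpyw (by rw [Category.assoc, hiy]; exact h1'))
    (by rw [← Category.assoc, hiy]; exact h2')

end Paper

/-- **2.6, the dual of Quillen's path-object argument.**
Let `E` be a model category and `F ⊣ G` an adjunction, where cofibrations and weak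
equivalences in `C` are created by `F`. If `C` is finitely cocomplete, has a cofibrant
replacement functor and a (functorial) cylinder object for cofibrant objects, then every map
of `C` with the right lifting property with respect to all cofibrations is a weak
equivalence. -/
theorem dual_quillen_path_object_argument
    {E : Type u} [Category.{v} E] [HasFiniteLimits E] [HasFiniteColimits E]
    (M : ModelStruct E)
    {C : Type w} [Category.{v} C] [HasFiniteColimits C]
    (F : C ⥤ E) (G : E ⥤ C) (adj : F ⊣ G)
    -- a cofibrant replacement functor
    (Q : C ⥤ C) (q : Q ⟶ 𝟭 C)
    (hQcof : ∀ X : C, M.Cof (F.map (initial.to (Q.obj X))))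
    (hQw : ∀ X : C, M.W (F.map (q.app X)))
    -- a cylinder object for each cofibrant object
    (hcyl : ∀ X : C, M.Cof (F.map (initial.to X)) →
      ∃ (Z : C) (i : X ⨿ X ⟶ Z) (p : Z ⟶ X),
        i ≫ p = coprod.desc (𝟙 X) (𝟙 X) ∧ M.Cof (F.map i) ∧ M.W (F.map p))
    {X Y : C} (f : X ⟶ Y)
    (hf : ∀ {A B : C} (g : A ⟶ B), M.Cof (F.map g) → HasLiftingProperty g f) :
    M.W (F.map f) := by
  haveI := M.w_two_out_of_three
  -- Step 1: a map s : Q Y ⟶ X with s ≫ f = q.app Y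
  haveI h1 : HasLiftingProperty (initial.to (Q.obj Y)) f := hf _ (hQcof Y)
  have sq1 : CommSq (initial.to X) (initial.to (Q.obj Y)) f (q.app Y) :=
    ⟨Limits.initial.hom_ext _ _⟩
  obtain ⟨s, hs2⟩ : ∃ s, s ≫ f = q.app Y := ⟨sq1.lift, sq1.fac_right⟩
  -- Step 2: a cylinder object on Q X
  obtain ⟨Z, i, p, hip, hicof, hpw⟩ := hcyl (Q.obj X) (hQcof X)
  -- Step 3: lift the homotopy square
  haveI h2 : HasLiftingProperty i f := hf i hicof
  have natf : Q.map f ≫ q.app Y = q.app X ≫ f := q.naturality f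
  have sq2 : CommSq (coprod.desc (q.app X) (Q.map f ≫ s)) i f (p ≫ Q.map f ≫ q.app Y) := by
    constructor
    rw [← Category.assoc, hip]
    apply Limits.coprod.hom_ext
    · simp [natf, coprod.inl_desc]
    · simp only [coprod.desc_comp, coprod.inr_desc, Category.assoc, coprod.inl_desc]
      rw [hs2, Category.id_comp]
  obtain ⟨H, hH1⟩ : ∃ H, i ≫ H = coprod.desc (q.app X) (Q.map f ≫ s) :=
    ⟨sq2.lift, sq2.fac_left⟩
  -- Step 4: weak-equivalence chase
  have hi0 : M.W (F.map (coprod.inl ≫ i)) := by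
    apply M.W.of_postcomp _ (F.map p) hpw
    rw [← F.map_comp, Category.assoc, hip]
    simpa [coprod.inl_desc] using M.w_id.id_mem (F.obj (Q.obj X))
  have hi1 : M.W (F.map (coprod.inr ≫ i)) := by
    apply M.W.of_postcomp _ (F.map p) hpw
    rw [← F.map_comp, Category.assoc, hip]
    simpa [coprod.inr_desc] using M.w_id.id_mem (F.obj (Q.obj X))
  have hH : M.W (F.map H) := by
    apply M.W.of_precomp (F.map (coprod.inl ≫ i)) _ hi0
    rw [← F.map_comp, Category.assoc, hH1]
    simpa [coprod.inl_desc] using hQw X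
  have hQfs : M.W (F.map (Q.map f) ≫ F.map s) := by
    have h3 : M.W (F.map (coprod.inr ≫ i) ≫ F.map H) := M.W.comp_mem _ _ hi1 hH
    rw [← F.map_comp, Category.assoc, hH1] at h3
    simp only [coprod.inr_desc] at h3
    rw [F.map_comp] at h3
    exact h3
  have hsf : M.W (F.map s ≫ F.map f) := by
    rw [← F.map_comp, hs2]; exact hQw Y
  have hsw : M.W (F.map s) := M.two_of_six (F.map (Q.map f)) (F.map s) (F.map f) hQfs hsf
  exact M.W.of_precomp (F.map s) (F.map f) hsw hsf
end
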